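/- arXiv:2411.09396 — 2 statements merged into one kernel-verified Lean document; each statement's English description precedes it below -/
import Mathlib

section
/- Let M be an admissible matroid on J. Then every flat of M is either admissible or totally inadmissible. -/
set_option maxHeartbeats 1000000


open Set Matroid
open scoped Matroid

open scoped Classical

/-- The ground set `J = [n] ⊔ [n]*`: `Sum.inl` is `[n]`, `Sum.inr` is `[n]*`. -/
abbrev J (n : ℕ) := Fin n ⊕ Fin n

/-- The fixed-point-free involution `a ↦ a*` on `J n`. -/
def sstar {n : ℕ} (a : J n) : J n := Sum.swap a

/-- `A* = {a* : a ∈ A}`. -/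
def starSet {n : ℕ} (A : Set (J n)) : Set (J n) := sstar '' A

/-- `A` is admissible if `A ∩ A* = ∅`. -/
def Admissible {n : ℕ} (A : Set (J n)) : Prop := A ∩ starSet A = ∅

/-- `A` is totally inadmissible if `A* = A`. -/
def TotallyInadmissible {n : ℕ} (A : Set (J n)) : Prop := starSet A = A

/-- The rank of a set in a matroid (on a finite ground type). -/
noncomputable def Matroid.rSet {α : Type*} (M : Matroid α) (A : Set α) : ℕ :=
  sSup {k : ℕ | ∃ I, M.Indep I ∧ I ⊆ A ∧ I.ncard = k}

/-- The rank of a matroid. -/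
noncomputable def Matroid.rnk {α : Type*} (M : Matroid α) : ℕ := M.rSet M.E

/-- A loopless matroid: every singleton of the ground set is independent. -/
def Matroid.LooplessM {α : Type*} (M : Matroid α) : Prop := ∀ a ∈ M.E, M.Indep {a}

/-- `I^ad M`: the independent sets of `M` whose closure is admissible. -/
def Iad {n : ℕ} (M : Matroid (J n)) : Set (Set (J n)) :=
  {I | M.Indep I ∧ Admissible (M.closure I)}

/-- An admissible matroid on `J n`. -/
def IsAdmissibleMatroid {n : ℕ} (M : Matroid (J n)) : Prop :=
  M.E = Set.univ ∧ M.LooplessM ∧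
    ∀ A : Set (J n),
      M.rSet A = sSup {v : ℕ | ∃ I : Set (J n), M.Indep I ∧ Admissible I ∧ I ⊆ A ∧
        v = if ∃ a, a ∈ A ∧ sstar a ∈ A ∧ (I ∪ {a}) ∈ Iad M ∧ (I ∪ {sstar a}) ∈ Iad M
            then I.ncard + 2 else I.ncard}

/-- Strongly admissible sets with respect to `M`. -/
inductive StronglyAdmissible {n : ℕ} (M : Matroid (J n)) : Set (J n) → Prop
  | empty : StronglyAdmissible M ∅
  | insert {B : Set (J n)} {a : J n} : StronglyAdmissible M B →
      a ∉ M.closure B → sstar a ∉ M.closure B → StronglyAdmissible M (Insert.insert a B)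

/-- The Möbius function of a finite poset, valued in `ℤ`. -/
noncomputable def mob {α : Type*} [PartialOrder α] [Fintype α] (x y : α) : ℤ :=
  letI : DecidableEq α := Classical.decEq α
  letI : @DecidableRel α α (· < ·) := Classical.decRel _
  letI : @DecidableRel α α (· ≤ ·) := Classical.decRel _
  letI := Fintype.toLocallyFiniteOrder (α := α)
  IncidenceAlgebra.mu ℤ x y

/-- The lattice of flats of the ranked symplectic matroid associated to `M`:
admissible flats of `M` together with the ground set as top element. -/
abbrev LS {n : ℕ} (M : Matroid (J n)) :=
  {F : Set (J n) // (M.IsFlat F ∧ Admissible F) ∨ F = M.E}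

/-- The Möbius number `μ(S(M))` of the lattice of flats of the ranked symplectic matroid. -/
noncomputable def muS {n : ℕ} (M : Matroid (J n)) : ℤ :=
  if h : M.IsFlat ∅ ∧ Admissible (∅ : Set (J n)) then
    mob (⟨∅, Or.inl h⟩ : LS M) ⟨M.E, Or.inr rfl⟩
  else 0

/-- The Möbius function of the lattice of flats of `M`. -/
noncomputable def muFlats {n : ℕ} (M : Matroid (J n)) (F G : Set (J n)) : ℤ :=
  if h : M.IsFlat F ∧ M.IsFlat G then
    mob (⟨F, h.1⟩ : {X : Set (J n) // M.IsFlat X}) ⟨G, h.2⟩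
  else 0

/-- Matroid deletion. -/
def Matroid.del {α : Type*} (M : Matroid α) (D : Set α) : Matroid α := M ↾ (M.E \ D)

/-- Matroid contraction, via the dual. -/
def Matroid.con {α : Type*} (M : Matroid α) (C : Set α) : Matroid α := (M✶ ↾ (M✶.E \ C))✶

/-- A circuit: a minimal dependent subset of the ground set. -/
def Matroid.Circuit' {α : Type*} (M : Matroid α) (C : Set α) : Prop :=
  C ⊆ M.E ∧ ¬ M.Indep C ∧ ∀ D, D ⊂ C → M.Indep D

/-- Connectedness of a matroid: nonempty ground set and any two elements lie
in a common circuit. -/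
def Matroid.ConnectedM {α : Type*} (M : Matroid α) : Prop :=
  M.E.Nonempty ∧ ∀ a ∈ M.E, ∀ b ∈ M.E, a = b ∨ ∃ C, M.Circuit' C ∧ a ∈ C ∧ b ∈ C

/-- The 0/1-indicator vector of `B ⊆ J` in `ℝ^J`. -/
noncomputable def indic {n : ℕ} (B : Set (J n)) : J n → ℝ := fun a => if a ∈ B then 1 else 0

/-- The enveloping map `env : ℝ^J → ℝ^n`, `(env x)_i = x_i - x_{i*}`. -/
def envMap {n : ℕ} (x : J n → ℝ) : Fin n → ℝ := fun i => x (Sum.inl i) - x (Sum.inr i)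

/-- `e±_A ∈ ℝ^n`: `+1` on coordinates `i ∈ A`, `-1` on coordinates with `i* ∈ A`, `0` otherwise. -/
noncomputable def epm {n : ℕ} (A : Set (J n)) : Fin n → ℝ := envMap (indic A)

/-- The matroid polytope `P(S(M))` of the ranked symplectic matroid of `M`. -/
noncomputable def PolyS {n : ℕ} (M : Matroid (J n)) : Set (Fin n → ℝ) :=
  convexHull ℝ (epm '' {B | M.IsBase B ∧ Admissible B})

/-- The support of the Bergman fan of the ranked symplectic matroid of `M`. -/
def Berg {n : ℕ} (M : Matroid (J n)) : Set (Fin n → ℝ) :=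
  {ω | ∃ C : Finset (Set (J n)),
    (∀ F ∈ C, M.IsFlat F ∧ Admissible F ∧ F ≠ ∅) ∧
    (∀ F ∈ C, ∀ G ∈ C, F ⊆ G ∨ G ⊆ F) ∧
    ∃ a : Set (J n) → ℝ, (∀ F, 0 ≤ a F) ∧ ω = ∑ F ∈ C, a F • epm F}

/-- A maximal chain `F₁ ⊊ ⋯ ⊊ F_d` of proper flats of the lattice of flats of `S(M)`,
where `rank_M (F i) = i + 1`. -/
def IsFlagChain {n : ℕ} (M : Matroid (J n)) (d : ℕ) (F : Fin d → Set (J n)) : Prop :=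
  (∀ i, M.IsFlat (F i) ∧ Admissible (F i) ∧ M.rSet (F i) = (i : ℕ) + 1) ∧
    ∀ i j : Fin d, i < j → F i ⊂ F j

/-- A Minkowski weight of dimension `d` on the Bergman fan of `S(M)`. -/
def IsMinkowskiWeight {n : ℕ} (M : Matroid (J n)) (d : ℕ)
    (c : (Fin d → Set (J n)) → ℤ) : Prop :=
  ∀ (σ : Fin d → Set (J n)) (k : Fin d), IsFlagChain M d σ →
    (∑ G ∈ Finset.univ.filter
        (fun G : Set (J n) => IsFlagChain M d (Function.update σ k G)),
        (c (Function.update σ k G) : ℝ) • epm G)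
      ∈ Submodule.span ℝ {v : Fin n → ℝ | ∃ i : Fin d, i ≠ k ∧ v = epm (σ i)}

/-- The top (rank `d`) flat of a maximal chain. -/
def chainTop {n d : ℕ} (σ : Fin d → Set (J n)) : Set (J n) := ⋃ i, σ i


lemma sstar_sstar {n : ℕ} (a : J n) : sstar (sstar a) = a := Sum.swap_swap a

lemma sstar_ne {n : ℕ} (a : J n) : sstar a ≠ a := by
  cases a <;> simp [sstar]

lemma Admissible.not_pair {n : ℕ} {A : Set (J n)} (h : Admissible A) {x : J n}
    (hx : x ∈ A) (hx' : sstar x ∈ A) : False := by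
  have hmem : x ∈ A ∩ starSet A := ⟨hx, ⟨sstar x, hx', sstar_sstar x⟩⟩
  rw [h] at hmem
  exact hmem

lemma mem_of_eq_sSup {S : Set ℕ} (hne : S.Nonempty) (hbdd : BddAbove S) {m : ℕ}
    (h : m = sSup S) : m ∈ S := h ▸ Nat.sSup_mem hne hbdd

lemma adm_key {n : ℕ} {M : Matroid (J n)} (hM : IsAdmissibleMatroid M) {F : Set (J n)}
    (hF : M.IsFlat F) {a : J n} (haF : a ∈ F) (haF' : sstar a ∈ F) :
    ∀ b ∈ F, sstar b ∈ F := by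
  obtain ⟨hE, hloop, hrank⟩ := hM
  intro b hbF
  by_contra hbs
  -- helper : a set with admissible closure contains no pair
  have hpair : ∀ S : Set (J n), Admissible (M.closure S) → ∀ x ∈ S, sstar x ∉ S := by
    intro S hS x hx hx'
    have hSE : S ⊆ M.E := by rw [hE]; exact Set.subset_univ S
    exact hS.not_pair (M.subset_closure S hSE hx) (M.subset_closure S hSE hx')
  -- build a basis B of F containing b
  have hbJ : M.Indep {b} := hloop b (by rw [hE]; trivial)
  obtain ⟨B, hB, hbB'⟩ := hbJ.subset_isBasis_of_subset
    (Set.singleton_subset_iff.2 hbF) hF.subset_ground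
  have hbB : b ∈ B := hbB' rfl
  have hBF : B ⊆ F := hB.subset
  have hclB : M.closure B = F := by rw [hB.closure_eq_closure, hF.closure]
  have hBi : M.Indep B := hB.indep
  have hbsB : sstar b ∉ B := fun h => hbs (hBF h)
  set A : Set (J n) := insert (sstar b) B with hAdef
  have hbA : b ∈ A := Set.mem_insert_of_mem _ hbB
  have hbsA : sstar b ∈ A := Set.mem_insert _ _
  have hAi : M.Indep A := by
    rw [hAdef, hBi.insert_indep_iff_of_notMem hbsB]
    exact ⟨by rw [hE]; trivial, by rw [hclB]; exact hbs⟩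
  have hcardA : A.ncard = B.ncard + 1 := Set.ncard_insert_of_notMem hbsB B.toFinite
  -- rSet A = |A|
  have hbdd : ∀ k ∈ {k : ℕ | ∃ I, M.Indep I ∧ I ⊆ A ∧ I.ncard = k}, k ≤ A.ncard := by
    rintro k ⟨I, _, hIA, rfl⟩
    exact Set.ncard_le_ncard hIA A.toFinite
  have hrSetA : M.rSet A = A.ncard := by
    refine le_antisymm (csSup_le ⟨A.ncard, A, hAi, subset_rfl, rfl⟩ hbdd) ?_
    exact le_csSup ⟨A.ncard, hbdd⟩ ⟨A, hAi, subset_rfl, rfl⟩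
  -- the admissible rank formula for A
  have hform := hrank A
  rw [hrSetA] at hform
  have hmem := mem_of_eq_sSup ?_ ?_ hform
  rotate_left
  · exact ⟨_, ∅, M.empty_indep, by simp [Admissible, starSet], Set.empty_subset A, rfl⟩
  · refine ⟨A.ncard + 2, ?_⟩
    rintro v ⟨I, _, _, hIA, rfl⟩
    have := Set.ncard_le_ncard hIA A.toFinite
    split <;> omega
  obtain ⟨I, hIi, hIadm, hIA, hval⟩ := hmem
  split_ifs at hval with hcond
  · obtain ⟨c, hcA, hcsA, hc1, hc2⟩ := hcond
    simp only [Iad, Set.mem_setOf_eq] at hc1 hc2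
    have hcI : c ∉ I := fun h => hpair _ hc2.2 c (Or.inl h) (Or.inr rfl)
    have hcsI : sstar c ∉ I := fun h => hpair _ hc1.2 c (Or.inr rfl) (Or.inl h)
    have hcard1 : (I ∪ {c}).ncard = B.ncard := by
      rw [Set.union_singleton, Set.ncard_insert_of_notMem hcI I.toFinite]; omega
    have hcard2 : (I ∪ {sstar c}).ncard = B.ncard := by
      rw [Set.union_singleton, Set.ncard_insert_of_notMem hcsI I.toFinite]; omega
    -- any of the two extensions must contain b*
    have hsub : ∀ d : J n, d ∈ A → M.Indep (I ∪ {d}) → Admissible (M.closure (I ∪ {d})) →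
        (I ∪ {d}).ncard = B.ncard → sstar b ∈ I ∪ {d} := by
      intro d hdA _ hdadm hdcard
      by_contra hbsJ
      have hJB : I ∪ {d} ⊆ B := by
        intro x hx
        have hxA : x ∈ A := by
          rcases hx with hx | hx
          · exact hIA hx
          · rwa [hx]
        rcases hxA with hx' | hx'
        · exact absurd (hx' ▸ hx) hbsJ
        · exact hx'
      have hJeq : I ∪ {d} = B :=
        Set.eq_of_subset_of_ncard_le hJB (le_of_eq hdcard.symm) B.toFinite
      rw [hJeq, hclB] at hdadm
      exact hdadm.not_pair haF haF'
    have hbs1 : sstar b ∈ I ∪ {c} := hsub c hcA hc1.1 hc1.2 hcard1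
    have hbs2 : sstar b ∈ I ∪ {sstar c} := hsub (sstar c) hcsA hc2.1 hc2.2 hcard2
    have hbsI : sstar b ∈ I := by
      rcases hbs1 with h | h
      · exact h
      rcases hbs2 with h' | h'
      · exact h'
      exact absurd (h'.symm.trans h) (sstar_ne c)
    have hb1 : b ∉ I ∪ {c} := fun h => hpair _ hc1.2 b h (Or.inl hbsI)
    have hb2 : b ∉ I ∪ {sstar c} := fun h => hpair _ hc2.2 b h (Or.inl hbsI)
    set K : Set (J n) := insert (sstar b) (B \ {b}) with hKdef
    have hKcard : K.ncard = B.ncard := by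
      rw [hKdef, Set.ncard_insert_of_notMem (fun h => hbsB h.1) (B \ {b}).toFinite,
        Set.ncard_diff_singleton_add_one hbB B.toFinite]
    have hsubK : ∀ d : J n, d ∈ A → b ∉ I ∪ {d} → I ∪ {d} ⊆ K := by
      intro d hdA hbJ x hx
      have hxA : x ∈ A := by
        rcases hx with hx | hx
        · exact hIA hx
        · rwa [hx]
      rcases hxA with hx' | hx'
      · exact hx' ▸ Set.mem_insert _ _
      · exact Set.mem_insert_of_mem _ ⟨hx', fun hxb => hbJ (hxb ▸ hx)⟩
    have heq1 : I ∪ {c} = K :=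
      Set.eq_of_subset_of_ncard_le (hsubK c hcA hb1)
        (le_of_eq (hKcard.trans hcard1.symm)) K.toFinite
    have heq2 : I ∪ {sstar c} = K :=
      Set.eq_of_subset_of_ncard_le (hsubK (sstar c) hcsA hb2)
        (le_of_eq (hKcard.trans hcard2.symm)) K.toFinite
    have hcK : c ∈ I ∪ {sstar c} := by
      rw [heq2, ← heq1]; exact Or.inr rfl
    rcases hcK with h | h
    · exact hcI h
    · exact sstar_ne c h.symm
  · 
    have hIeq : I = A := Set.eq_of_subset_of_ncard_le hIA (le_of_eq hval) A.toFinite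
    rw [hIeq] at hIadm
    exact hIadm.not_pair hbA hbsA

theorem stmt_0 (n : ℕ) (hn : 1 ≤ n) (M : Matroid (J n)) (hM : IsAdmissibleMatroid M)
    (F : Set (J n)) (hF : M.IsFlat F) :
    Admissible F ∨ TotallyInadmissible F := by
  by_cases hadm : Admissible F
  · exact Or.inl hadm
  right
  have hne : (F ∩ starSet F).Nonempty := Set.nonempty_iff_ne_empty.2 hadm
  obtain ⟨x, hxF, y, hyF, hyx⟩ := hne
  have key := adm_key hM hF hyF (hyx ▸ hxF)
  unfold TotallyInadmissible starSet
  ext z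
  constructor
  · rintro ⟨w, hw, rfl⟩
    exact key w hw
  · intro hz
    exact ⟨sstar z, key z hz, sstar_sstar z⟩
end

section
/- Let M be an admissible matroid on J of rank d + 1, S = S(M) the associated ranked symplectic matroid, and c a Minkowski weight of dimension d on the Bergman fan of S. If σ₁ = (F₁ ⊊ … ⊊ F_d) and σ₂ = (G₁ ⊊ … ⊊ G_d) are maximal chains of L(S) ∖ {∅, J} with F_d = G_d, then c(σ₁) = c(σ₂). -/
open Set Matroid
open scoped Matroid

open scoped Classical

section Aux
set_option linter.unusedSectionVars false

lemma admissible_iff' {n : ℕ} {A : Set (J n)} :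
    Admissible A ↔ ∀ a ∈ A, sstar a ∉ A := by
  constructor
  · intro h a ha hsa
    have : a ∈ A ∩ starSet A := ⟨ha, ⟨sstar a, hsa, sstar_sstar a⟩⟩
    simp [Admissible] at h
    exact absurd this (by rw [h]; exact notMem_empty a)
  · intro h
    ext x
    simp only [Set.mem_inter_iff, Set.mem_empty_iff_false, iff_false, not_and]
    rintro hx ⟨y, hy, rfl⟩
    exact h y hy hx

lemma Admissible.mono {n : ℕ} {A B : Set (J n)} (hAB : A ⊆ B) (hB : Admissible B) :
    Admissible A := by
  rw [admissible_iff'] at hB ⊢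
  exact fun a ha hsa => hB a (hAB ha) (hAB hsa)

variable {α : Type*} [Fintype α] {M : Matroid α} {I I' X Y F G : Set α}

lemma rankSet_nonempty (M : Matroid α) (X : Set α) :
    {k : ℕ | ∃ I, M.Indep I ∧ I ⊆ X ∧ I.ncard = k}.Nonempty :=
  ⟨0, ∅, M.empty_indep, empty_subset X, Set.ncard_empty α⟩

lemma rankSet_bddAbove (M : Matroid α) (X : Set α) :
    BddAbove {k : ℕ | ∃ I, M.Indep I ∧ I ⊆ X ∧ I.ncard = k} := by
  refine ⟨Fintype.card α, ?_⟩
  rintro k ⟨I, _, _, rfl⟩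
  simpa [Set.ncard_univ] using Set.ncard_le_ncard (subset_univ I) finite_univ

lemma Matroid.Indep.ncard_le_rSet (hI : M.Indep I) (hIX : I ⊆ X) :
    I.ncard ≤ M.rSet X :=
  le_csSup (rankSet_bddAbove M X) ⟨I, hI, hIX, rfl⟩

lemma Matroid.IsBasis.rSet_eq (h : M.IsBasis I X) : M.rSet X = I.ncard := by
  refine le_antisymm (csSup_le (rankSet_nonempty M X) ?_) (h.indep.ncard_le_rSet h.subset)
  rintro k ⟨I', hI', hI'X, rfl⟩
  obtain ⟨K, hK, hI'K⟩ := hI'.subset_isBasis_of_subset hI'X h.subset_ground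
  have hKI : K.ncard = I.ncard := by
    rw [Set.ncard_def, Set.ncard_def, hK.encard_eq_encard h]
  exact le_trans (Set.ncard_le_ncard hI'K K.toFinite) hKI.le

lemma Matroid.Indep.rSet_eq (hI : M.Indep I) : M.rSet I = I.ncard :=
  hI.isBasis_self.rSet_eq

lemma rSet_mono (M : Matroid α) (h : X ⊆ Y) : M.rSet X ≤ M.rSet Y := by
  apply csSup_le (rankSet_nonempty M X)
  rintro k ⟨I, hI, hIX, rfl⟩
  exact hI.ncard_le_rSet (hIX.trans h)

lemma rSet_closure_eq (M : Matroid α) (hX : X ⊆ M.E) :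
    M.rSet (M.closure X) = M.rSet X := by
  obtain ⟨I, hI⟩ := M.exists_isBasis X hX
  rw [hI.isBasis_closure_right.rSet_eq, hI.rSet_eq]

lemma flat_eq_of_rSet_le (hF : M.IsFlat F) (hG : M.IsFlat G) (hFG : F ⊆ G)
    (hr : M.rSet G ≤ M.rSet F) : F = G := by
  obtain ⟨I, hI⟩ := M.exists_isBasis F hF.subset_ground
  obtain ⟨K, hK, hIK⟩ := hI.indep.subset_isBasis_of_subset (hI.subset.trans hFG) hG.subset_ground
  have hcard : K.ncard ≤ I.ncard := by
    rw [← hK.rSet_eq, ← hI.rSet_eq]; exact hr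
  have hIK' : I = K := Set.eq_of_subset_of_ncard_le hIK hcard K.toFinite
  have h1 : M.closure I = G := by rw [hIK', hK.closure_eq_closure, hG.closure]
  have h2 : M.closure I ⊆ F := by rw [hI.closure_eq_closure, hF.closure]
  exact hFG.antisymm (h1 ▸ h2)

lemma rSet_lt_of_flat_ssubset (hF : M.IsFlat F) (hG : M.IsFlat G) (hFG : F ⊂ G) :
    M.rSet F < M.rSet G := by
  rcases lt_or_ge (M.rSet F) (M.rSet G) with h | h
  · exact h
  · exact absurd (flat_eq_of_rSet_le hF hG hFG.subset h) hFG.ne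

lemma flat_closure (M : Matroid α) (X : Set α) : M.IsFlat (M.closure X) := by
  rw [Matroid.closure_def]
  haveI : Nonempty ↑{F : Set α | M.IsFlat F ∧ X ∩ M.E ⊆ F} :=
    ⟨⟨M.E, M.ground_isFlat, inter_subset_right⟩⟩
  rw [sInter_eq_iInter]
  exact Matroid.IsFlat.iInter (fun F => F.2.1)

lemma Matroid.IsFlat.inter' (hF : M.IsFlat F) (hG : M.IsFlat G) : M.IsFlat (F ∩ G) := by
  have : F ∩ G = ⋂ b : Bool, (if b then F else G) := by
    ext x; simp [Bool.forall_bool, and_comm]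
  rw [this]
  exact Matroid.IsFlat.iInter (fun b => by cases b <;> simpa)

lemma rSet_submod (M : Matroid α) (hX : X ⊆ M.E) (hY : Y ⊆ M.E) :
    M.rSet (X ∪ Y) + M.rSet (X ∩ Y) ≤ M.rSet X + M.rSet Y := by
  obtain ⟨I₀, hI₀⟩ := M.exists_isBasis (X ∩ Y) ((inter_subset_left).trans hX)
  obtain ⟨K, hK, hI₀K⟩ := hI₀.indep.subset_isBasis_of_subset
    (hI₀.subset.trans (inter_subset_left.trans subset_union_left)) (union_subset hX hY)
  have hcount : (K ∩ X).ncard + (K ∩ Y).ncard = K.ncard + (K ∩ (X ∩ Y)).ncard := by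
    have h1 : (K ∩ X) ∪ (K ∩ Y) = K := by
      rw [← inter_union_distrib_left, inter_eq_self_of_subset_left hK.subset]
    have h2 : (K ∩ X) ∩ (K ∩ Y) = K ∩ (X ∩ Y) := by
      ext x; simp; tauto
    have := Set.ncard_union_add_ncard_inter (K ∩ X) (K ∩ Y) (K ∩ X).toFinite (K ∩ Y).toFinite
    rw [h1, h2] at this
    exact this.symm
  have hX' : (K ∩ X).ncard ≤ M.rSet X :=
    (hK.indep.subset inter_subset_left).ncard_le_rSet inter_subset_right
  have hY' : (K ∩ Y).ncard ≤ M.rSet Y :=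
    (hK.indep.subset inter_subset_left).ncard_le_rSet inter_subset_right
  have hI₀sub : I₀ ⊆ K ∩ (X ∩ Y) := subset_inter hI₀K hI₀.subset
  have hI₀card : I₀.ncard ≤ (K ∩ (X ∩ Y)).ncard :=
    Set.ncard_le_ncard hI₀sub (K ∩ (X ∩ Y)).toFinite
  rw [hK.rSet_eq, hI₀.rSet_eq]
  omega

lemma closure_empty_of_loopless (hL : M.LooplessM) : M.closure ∅ = ∅ := by
  by_contra h
  obtain ⟨x, hx⟩ := Set.nonempty_iff_ne_empty.2 h
  have hxE : x ∈ M.E := M.closure_subset_ground ∅ hx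
  have hind : M.Indep {x} := hL x hxE
  have : x ∉ M.closure ({x} \ {x}) := by
    simpa using hind.notMem_closure_diff_of_mem (mem_singleton x)
  simp at this
  exact this hx

lemma flat_empty_of_loopless (hL : M.LooplessM) : M.IsFlat ∅ := by
  have := flat_closure M ∅
  rwa [closure_empty_of_loopless hL] at this

lemma rSet_empty (M : Matroid α) : M.rSet ∅ = 0 := by
  have := (M.empty_indep).rSet_eq
  simpa using this

end Aux
section Chains
set_option linter.unusedSectionVars false
variable {α : Type*} [Fintype α] {M : Matroid α} {X Y : Set α}

lemma exists_flat_chain (hX : M.IsFlat X) (hY : M.IsFlat Y) (hXY : X ⊆ Y) :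
    ∃ ρ : ℕ → Set α, ρ (M.rSet X) = X ∧ ρ (M.rSet Y) = Y ∧
      (∀ t, M.rSet X ≤ t → t ≤ M.rSet Y → M.IsFlat (ρ t) ∧ M.rSet (ρ t) = t ∧ ρ t ⊆ Y) ∧
      (∀ s t, s ≤ t → ρ s ⊆ ρ t) := by
  obtain ⟨I, hI⟩ := M.exists_isBasis X hX.subset_ground
  obtain ⟨K, hK, hIK⟩ := hI.indep.subset_isBasis_of_subset (hI.subset.trans hXY) hY.subset_ground
  set m := M.rSet X with hm
  have hmI : I.ncard = m := by rw [hm, hI.rSet_eq]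
  have hmY : M.rSet Y = K.ncard := hK.rSet_eq
  have hmK : m ≤ K.ncard := by
    rw [← hmI]; exact Set.ncard_le_ncard hIK K.toFinite
  set D := K \ I with hD
  set DF := D.toFinite.toFinset with hDF
  set cD := DF.card with hcDdef
  have hcD : cD = K.ncard - m := by
    rw [hcDdef, hDF, ← Set.ncard_eq_toFinset_card D D.toFinite, hD,
      Set.ncard_diff hIK I.toFinite, hmI]
  let φ : Fin cD → α := fun j => (DF.equivFin.symm j : α)
  have hφinj : Function.Injective φ :=
    Subtype.coe_injective.comp DF.equivFin.symm.injective
  have hφmem : ∀ j, φ j ∈ D := fun j => by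
    have := (DF.equivFin.symm j).2
    simpa [hDF, Set.Finite.mem_toFinset] using this
  have hrange : Set.range φ = D := by
    ext x
    constructor
    · rintro ⟨j, rfl⟩; exact hφmem j
    · intro hx
      refine ⟨DF.equivFin ⟨x, by simpa [hDF, Set.Finite.mem_toFinset] using hx⟩, ?_⟩
      simp [φ]
  set ρ : ℕ → Set α := fun t => M.closure (I ∪ φ '' {j | (j : ℕ) + m < t}) with hρ
  have hsubK : ∀ t, I ∪ φ '' {j : Fin cD | (j : ℕ) + m < t} ⊆ K := by
    intro t
    refine union_subset hIK ?_
    rintro x ⟨j, -, rfl⟩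
    exact (hφmem j).1
  have hρm : ρ m = X := by
    have h0 : {j : Fin cD | (j : ℕ) + m < m} = ∅ := by
      ext j; simp
    rw [hρ]
    simp only [h0, Set.image_empty, union_empty]
    rw [hI.closure_eq_closure, hX.closure]
  have hρY : ρ (M.rSet Y) = Y := by
    have hall : {j : Fin cD | (j : ℕ) + m < M.rSet Y} = Set.univ := by
      ext j
      have := j.2
      simp only [Set.mem_setOf_eq, Set.mem_univ, iff_true, hmY]
      omega
    rw [hρ]
    simp only [hall, Set.image_univ, hrange]
    rw [union_diff_cancel hIK, hK.closure_eq_closure, hY.closure]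
  refine ⟨ρ, hρm, hρY, ?_, ?_⟩
  · intro t hmt htY
    have hindep : M.Indep (I ∪ φ '' {j : Fin cD | (j : ℕ) + m < t}) :=
      hK.indep.subset (hsubK t)
    have hflat : M.IsFlat (ρ t) := flat_closure M _
    have hcount : (φ '' {j : Fin cD | (j : ℕ) + m < t}).ncard = t - m := by
      rw [Set.ncard_image_of_injective _ hφinj]
      have hset : {j : Fin cD | (j : ℕ) + m < t} =
          Set.range (Fin.castLE (show t - m ≤ cD by omega)) := by
        ext j
        constructor
        · intro hj
          exact ⟨⟨(j : ℕ), by simp only [Set.mem_setOf_eq] at hj; omega⟩, by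
            apply Fin.ext; simp⟩
        · rintro ⟨i, rfl⟩
          have := i.2
          simp only [Set.mem_setOf_eq, Fin.coe_castLE]
          omega
      rw [hset, ← Set.image_univ, Set.ncard_image_of_injective _ (Fin.castLE_injective _),
        Set.ncard_univ, Nat.card_eq_fintype_card, Fintype.card_fin]
    have hrank : M.rSet (ρ t) = t := by
      rw [hρ]
      rw [rSet_closure_eq M ((hsubK t).trans (hK.subset.trans hY.subset_ground))]
      rw [hindep.rSet_eq]
      rw [Set.ncard_union_eq ?_ I.toFinite (φ '' _).toFinite]
      · rw [hcount, hmI]; omega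
      · exact Set.disjoint_sdiff_right.mono_right (by rintro x ⟨j, -, rfl⟩; exact hφmem j)
    refine ⟨hflat, hrank, ?_⟩
    calc ρ t ⊆ M.closure K := M.closure_subset_closure (hsubK t)
    _ = Y := by rw [hK.closure_eq_closure, hY.closure]
  · intro s t hst
    apply M.closure_subset_closure
    apply union_subset_union_right
    apply Set.image_mono
    intro j hj
    simp only [Set.mem_setOf_eq] at hj ⊢
    omega

end Chains
section Flag
set_option linter.unusedSectionVars false
variable {n : ℕ} {M : Matroid (J n)} {d : ℕ} {σ : Fin d → Set (J n)}

lemma IsFlagChain.monoSub (h : IsFlagChain M d σ) {i j : Fin d} (hij : i ≤ j) :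
    σ i ⊆ σ j := by
  rcases eq_or_lt_of_le hij with rfl | h'
  · exact Set.Subset.rfl
  · exact (h.2 i j h').subset

lemma isFlagChain_mk {F : Fin d → Set (J n)}
    (h1 : ∀ i, M.IsFlat (F i) ∧ Admissible (F i) ∧ M.rSet (F i) = (i : ℕ) + 1)
    (h2 : ∀ (i : ℕ) (h : i + 1 < d), F ⟨i, by omega⟩ ⊆ F ⟨i + 1, h⟩) :
    IsFlagChain M d F := by
  have mono : ∀ (p : ℕ) (i j : Fin d), (j : ℕ) = (i : ℕ) + p → F i ⊆ F j := by
    intro p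
    induction p with
    | zero =>
      intro i j h
      have : i = j := Fin.ext (by omega)
      rw [this]
    | succ q ih =>
      intro i j h
      have hd1 : (i : ℕ) + q + 1 < d := by have := j.2; omega
      have hq : (i : ℕ) + q < d := by omega
      refine (ih i ⟨(i : ℕ) + q, hq⟩ rfl).trans ?_
      have hstep := h2 ((i : ℕ) + q) hd1
      have hj : j = ⟨(i : ℕ) + q + 1, hd1⟩ := Fin.ext (by show (j : ℕ) = (i : ℕ) + q + 1; omega)
      rw [hj]
      exact hstep
  refine ⟨h1, fun i j hij => ?_⟩
  have hij' : (i : ℕ) < (j : ℕ) := hij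
  have hsub : F i ⊆ F j := mono ((j : ℕ) - (i : ℕ)) i j (by omega)
  refine ssubset_of_subset_of_ne hsub (fun he => ?_)
  have hr : M.rSet (F i) = M.rSet (F j) := by rw [he]
  rw [(h1 i).2.2, (h1 j).2.2] at hr
  omega

end Flag

section Epm
variable {n : ℕ}

/-- The coordinate in `Fin n` associated to an element of `J n`. -/
def tcoord {n : ℕ} (a : J n) : Fin n := Sum.elim id id a

/-- The sign of an element of `J n`. -/
def sgn {n : ℕ} (a : J n) : ℝ := Sum.elim (fun _ => 1) (fun _ => -1) a

lemma sgn_ne_zero (a : J n) : sgn a ≠ 0 := by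
  cases a <;> simp [sgn]

lemma epm_tcoord_of_mem {A : Set (J n)} {a : J n} (ha : a ∈ A) (ha' : sstar a ∉ A) :
    epm A (tcoord a) = sgn a := by
  cases a with
  | inl j =>
    have h2 : Sum.inr j ∉ A := ha'
    simp [epm, envMap, indic, tcoord, sgn, ha, h2]
  | inr j =>
    have h2 : Sum.inl j ∉ A := ha'
    simp [epm, envMap, indic, tcoord, sgn, ha, h2]

lemma epm_tcoord_of_not_mem {A : Set (J n)} {a : J n} (ha : a ∉ A) (ha' : sstar a ∉ A) :
    epm A (tcoord a) = 0 := by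
  cases a with
  | inl j =>
    have h2 : Sum.inr j ∉ A := ha'
    simp [epm, envMap, indic, tcoord, ha, h2]
  | inr j =>
    have h2 : Sum.inl j ∉ A := ha'
    simp [epm, envMap, indic, tcoord, ha, h2]

end Epm
section Key
set_option linter.unusedSectionVars false
set_option maxHeartbeats 1000000
variable {n : ℕ} {M : Matroid (J n)} {d : ℕ}

lemma key_equal (hE : M.E = Set.univ) (hL : M.LooplessM)
    {c : (Fin d → Set (J n)) → ℤ} (hc : IsMinkowskiWeight M d c)
    {σ : Fin d → Set (J n)} (hσ : IsFlagChain M d σ) (k : Fin d)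
    (hk : (k : ℕ) + 1 < d) {G : Set (J n)}
    (hG : IsFlagChain M d (Function.update σ k G)) :
    c (Function.update σ k G) = c σ := by
  have hsubE : ∀ X : Set (J n), X ⊆ M.E := fun X => by rw [hE]; exact subset_univ X
  set kk1 : Fin d := ⟨(k : ℕ) + 1, hk⟩ with hkk1def
  have hkk1ne : kk1 ≠ k := Fin.ne_of_val_ne (by simp [hkk1def])
  have hklt : k < kk1 := by rw [Fin.lt_def]; simp [hkk1def]
  -- facts about members of the fiber
  have hfiber : ∀ G'', IsFlagChain M d (Function.update σ k G'') →
      M.IsFlat G'' ∧ Admissible G'' ∧ M.rSet G'' = (k : ℕ) + 1 ∧ G'' ⊆ σ kk1 := by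
    intro G'' hG''
    have h1 := hG''.1 k
    rw [Function.update_self] at h1
    have h2 := (hG''.2 k kk1 hklt).subset
    rw [Function.update_self, Function.update_of_ne hkk1ne] at h2
    exact ⟨h1.1, h1.2.1, h1.2.2, h2⟩
  -- the common lower flat P
  obtain ⟨P, hPflat, hPrank, hPsub, hPlow⟩ :
      ∃ P, M.IsFlat P ∧ M.rSet P = (k : ℕ) ∧
        (∀ G'', IsFlagChain M d (Function.update σ k G'') → P ⊆ G'') ∧
        (∀ i : Fin d, (i : ℕ) < (k : ℕ) → σ i ⊆ P) := by
    rcases Nat.eq_zero_or_pos (k : ℕ) with h0 | hpos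
    · exact ⟨∅, flat_empty_of_loopless hL, by rw [rSet_empty, h0],
        fun _ _ => empty_subset _, fun i hi => absurd hi (by omega)⟩
    · have hkm : (k : ℕ) - 1 < d := by omega
      set km : Fin d := ⟨(k : ℕ) - 1, hkm⟩ with hkmdef
      have hkmk : km ≠ k := Fin.ne_of_val_ne (by simp [hkmdef]; omega)
      have hkmlt : km < k := by rw [Fin.lt_def]; simp [hkmdef]; omega
      refine ⟨σ km, (hσ.1 km).1, ?_, ?_, ?_⟩
      · rw [(hσ.1 km).2.2]; show (k : ℕ) - 1 + 1 = (k : ℕ); omega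
      · intro G'' hG''
        have := (hG''.2 km k hkmlt).subset
        rwa [Function.update_self, Function.update_of_ne hkmk] at this
      · intro i hi
        rcases eq_or_lt_of_le (show i ≤ km from by rw [Fin.le_def]; show (i : ℕ) ≤ (k : ℕ) - 1; omega) with
          heq | hlt
        · rw [heq]
        · exact (hσ.2 i km hlt).subset
  -- pairwise intersections equal P
  have hinter : ∀ G₁ G₂, IsFlagChain M d (Function.update σ k G₁) →
      IsFlagChain M d (Function.update σ k G₂) → G₁ ≠ G₂ → G₁ ∩ G₂ = P := by
    intro G₁ G₂ hG₁ hG₂ hne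
    obtain ⟨hf1, -, hr1, -⟩ := hfiber G₁ hG₁
    obtain ⟨hf2, -, hr2, -⟩ := hfiber G₂ hG₂
    have hZflat : M.IsFlat (G₁ ∩ G₂) := hf1.inter' hf2
    have hPZ : P ⊆ G₁ ∩ G₂ := subset_inter (hPsub G₁ hG₁) (hPsub G₂ hG₂)
    have hZne : G₁ ∩ G₂ ≠ G₁ := by
      intro h
      have hsub : G₁ ⊆ G₂ := by rw [← h]; exact inter_subset_right
      exact hne (flat_eq_of_rSet_le hf1 hf2 hsub (by rw [hr1, hr2]))
    have hZlt : M.rSet (G₁ ∩ G₂) < M.rSet G₁ :=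
      rSet_lt_of_flat_ssubset hZflat hf1 (ssubset_of_subset_of_ne inter_subset_left hZne)
    have hZge : M.rSet P ≤ M.rSet (G₁ ∩ G₂) := rSet_mono M hPZ
    refine (flat_eq_of_rSet_le hPflat hZflat hPZ (by omega)).symm
  -- the Minkowski weight relation
  have hmem := hc σ k hσ
  have hsetEq : {v : Fin n → ℝ | ∃ i : Fin d, i ≠ k ∧ v = epm (σ i)} =
      Set.range (fun i : {i : Fin d // i ≠ k} => epm (σ i.1)) := by
    ext v
    constructor
    · rintro ⟨i, hik, rfl⟩; exact ⟨⟨i, hik⟩, rfl⟩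
    · rintro ⟨⟨i, hik⟩, rfl⟩; exact ⟨i, hik, rfl⟩
  rw [hsetEq, Submodule.mem_span_range_iff_exists_fun] at hmem
  obtain ⟨ν, hν⟩ := hmem
  set T : ℝ := ∑ i : {i : Fin d // i ≠ k}, if (k : ℕ) < (i.1 : ℕ) then ν i else 0 with hTdef
  have claim : ∀ G', IsFlagChain M d (Function.update σ k G') →
      (c (Function.update σ k G') : ℝ) = T := by
    intro G' hG'
    obtain ⟨hG'flat, hG'adm, hG'rank, hG'sub⟩ := hfiber G' hG'
    have hPne : P ≠ G' := by
      intro h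
      rw [h, hG'rank] at hPrank
      omega
    obtain ⟨a, haG', haP⟩ := Set.exists_of_ssubset (ssubset_of_subset_of_ne (hPsub G' hG') hPne)
    have haG'star : sstar a ∉ G' := admissible_iff'.1 hG'adm a haG'
    have haσhi : ∀ i : Fin d, (k : ℕ) < (i : ℕ) → a ∈ σ i ∧ sstar a ∉ σ i := by
      intro i hi
      have hsub : σ kk1 ⊆ σ i :=
        hσ.monoSub (by rw [Fin.le_def]; show (k : ℕ) + 1 ≤ (i : ℕ); omega)
      have ha1 : a ∈ σ i := hsub (hG'sub haG')
      exact ⟨ha1, fun hs => (admissible_iff'.1 (hσ.1 i).2.1) a ha1 hs⟩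
    have halow : ∀ i : Fin d, (i : ℕ) < (k : ℕ) → a ∉ σ i ∧ sstar a ∉ σ i := by
      intro i hi
      have h1 : σ i ⊆ P := hPlow i hi
      refine ⟨fun h => haP (h1 h), fun h => ?_⟩
      exact (admissible_iff'.1 hG'adm) a haG' (hPsub G' hG' (h1 h))
    have haother : ∀ G'', IsFlagChain M d (Function.update σ k G'') → G'' ≠ G' →
        a ∉ G'' ∧ sstar a ∉ G'' := by
      intro G'' hG'' hne'
      constructor
      · intro h
        exact haP (by rw [← hinter G'' G' hG'' hG' hne'] at haP ⊢; exact ⟨h, haG'⟩)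
      · intro h
        have h1 : sstar a ∈ σ kk1 := (hfiber G'' hG'').2.2.2 h
        have h2 : a ∈ σ kk1 := hG'sub haG'
        exact (admissible_iff'.1 (hσ.1 kk1).2.1) a h2 h1
    have heval := congrFun hν (tcoord a)
    simp only [Finset.sum_apply, Pi.smul_apply, smul_eq_mul] at heval
    have hLHS : ∀ i : {i : Fin d // i ≠ k},
        ν i * epm (σ i.1) (tcoord a) = (if (k : ℕ) < (i.1 : ℕ) then ν i else 0) * sgn a := by
      intro i
      rcases lt_trichotomy ((i.1 : ℕ)) ((k : ℕ)) with h | h | h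
      · rw [epm_tcoord_of_not_mem (halow i.1 h).1 (halow i.1 h).2, if_neg (by omega)]
        ring
      · exact absurd (Fin.ext h) i.2
      · rw [epm_tcoord_of_mem (haσhi i.1 h).1 (haσhi i.1 h).2, if_pos h]
    have hRHS : (∑ G'' ∈ Finset.univ.filter
          (fun G'' : Set (J n) => IsFlagChain M d (Function.update σ k G'')),
          (c (Function.update σ k G'') : ℝ) * epm G'' (tcoord a))
        = (c (Function.update σ k G') : ℝ) * sgn a := by
      rw [Finset.sum_eq_single G']
      · rw [epm_tcoord_of_mem haG' haG'star]
      · intro G'' hmem' hne'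
        have hG''chain := (Finset.mem_filter.1 hmem').2
        rw [epm_tcoord_of_not_mem (haother G'' hG''chain hne').1
          (haother G'' hG''chain hne').2, mul_zero]
      · intro habs
        exact (habs (Finset.mem_filter.2 ⟨Finset.mem_univ G', hG'⟩)).elim
    have hL2 : ∑ x : {i : Fin d // i ≠ k}, ν x * epm (σ x.1) (tcoord a) = T * sgn a := by
      rw [hTdef, Finset.sum_mul]
      exact Finset.sum_congr rfl (fun i _ => hLHS i)
    have hfin : T * sgn a = (c (Function.update σ k G') : ℝ) * sgn a := by
      rw [← hL2, heval, hRHS]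
    exact (mul_right_cancel₀ (sgn_ne_zero a) hfin).symm
  have h1 := claim G hG
  have h2 := claim (σ k) (by rwa [Function.update_eq_self])
  rw [Function.update_eq_self] at h2
  exact_mod_cast h1.trans h2.symm

end Key
section Main
set_option linter.unusedSectionVars false
set_option maxHeartbeats 1000000
variable {n : ℕ} {M : Matroid (J n)} {d : ℕ}

lemma conn_aux (hE : M.E = Set.univ) (hL : M.LooplessM)
    {c : (Fin d → Set (J n)) → ℤ} (hc : IsMinkowskiWeight M d c) (hd : 0 < d) :
    ∀ (m l : ℕ), d ≤ l + m →
      ∀ σ τ : Fin d → Set (J n), IsFlagChain M d σ → IsFlagChain M d τ →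
        (∀ i : Fin d, (i : ℕ) < l → σ i = τ i) →
        σ ⟨d - 1, by omega⟩ = τ ⟨d - 1, by omega⟩ →
        c σ = c τ := by
  have hsubE : ∀ X : Set (J n), X ⊆ M.E := fun X => by rw [hE]; exact subset_univ X
  intro m
  induction m with
  | zero =>
    intro l hdl σ τ hσ hτ hagree htop
    have : σ = τ := funext fun i => hagree i (by have := i.2; omega)
    rw [this]
  | succ p ih =>
    intro l hdl σ τ hσ hτ hagree htop
    by_cases hld : l < d
    case neg =>
      have : σ = τ := funext fun i => hagree i (by have := i.2; omega)
      rw [this]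
    case pos =>
    set li : Fin d := ⟨l, hld⟩ with hlidef
    have hli : (li : ℕ) = l := rfl
    by_cases hsame : σ li = τ li
    · refine ih (l + 1) (by omega) σ τ hσ hτ ?_ htop
      intro i hi
      rcases Nat.lt_or_ge (i : ℕ) l with h | h
      · exact hagree i h
      · have : i = li := Fin.ext (by rw [hli]; omega)
        rw [this]; exact hsame
    · have hld1 : l < d - 1 := by
        rcases Nat.lt_or_ge l (d - 1) with h | h
        · exact h
        · exfalso
          apply hsame
          have : li = ⟨d - 1, by omega⟩ := Fin.ext (by show l = d - 1; omega)
          rw [this]; exact htop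
      have hl1d : l + 1 < d := by omega
      set Top : Fin d := ⟨d - 1, by omega⟩ with hTopdef
      have hTop : (Top : ℕ) = d - 1 := rfl
      have hTopne : Top ≠ li := Fin.ne_of_val_ne (by rw [hli, hTop]; omega)
      set x := σ li with hxdef
      set y := τ li with hydef
      obtain ⟨hxflat, hxadm, hxrank'⟩ := hσ.1 li
      obtain ⟨hyflat, hyadm, hyrank'⟩ := hτ.1 li
      obtain ⟨hTflat, hTadm, hTrank'⟩ := hσ.1 Top
      have hxrank : M.rSet x = l + 1 := by rw [← hxdef] at hxrank'; rw [hxrank', hli]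
      have hyrank : M.rSet y = l + 1 := by rw [← hydef] at hyrank'; rw [hyrank', hli]
      have hTrank : M.rSet (σ Top) = d := by rw [hTrank', hTop]; omega
      have hxTop : x ⊆ σ Top := hσ.monoSub (by rw [Fin.le_def, hli, hTop]; omega)
      have hyTop : y ⊆ σ Top := by
        rw [htop]; exact hτ.monoSub (by rw [Fin.le_def, hli, hTop]; omega)
      set z := M.closure (x ∪ y) with hzdef
      have hzflat : M.IsFlat z := flat_closure M _
      have hzTop : z ⊆ σ Top := by
        rw [hzdef, ← hTflat.closure]
        exact M.closure_subset_closure (union_subset hxTop hyTop)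
      have hzadm : Admissible z := Admissible.mono hzTop hTadm
      have hxz : x ⊆ z := subset_union_left.trans (M.subset_closure _ (hsubE _))
      have hyz : y ⊆ z := subset_union_right.trans (M.subset_closure _ (hsubE _))
      have hxy_lower : l ≤ M.rSet (x ∩ y) := by
        rcases Nat.eq_zero_or_pos l with h0 | hpos
        · omega
        · have hlm : l - 1 < d := by omega
          set lm : Fin d := ⟨l - 1, hlm⟩ with hlmdef
          have hlm' : (lm : ℕ) = l - 1 := rfl
          have h1 : σ lm = τ lm := hagree lm (by rw [hlm']; omega)
          have h2 : σ lm ⊆ x := hσ.monoSub (by rw [Fin.le_def, hlm', hli]; omega)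
          have h3 : σ lm ⊆ y := by
            rw [h1]; exact hτ.monoSub (by rw [Fin.le_def, hlm', hli]; omega)
          have h4 := rSet_mono M (subset_inter h2 h3)
          rw [(hσ.1 lm).2.2, hlm'] at h4
          omega
      have hzrank : M.rSet z = l + 2 := by
        have hsm := rSet_submod M (hsubE x) (hsubE y)
        rw [hxrank, hyrank] at hsm
        have hcl : M.rSet z = M.rSet (x ∪ y) := by
          rw [hzdef]; exact rSet_closure_eq M (hsubE _)
        have hge : l + 2 ≤ M.rSet z := by
          by_contra hcon
          push_neg at hcon
          have hxzrank : M.rSet z ≤ M.rSet x := by rw [hxrank]; omega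
          have hxzeq : x = z := flat_eq_of_rSet_le hxflat hzflat hxz hxzrank
          have hyx : y ⊆ x := by rw [hxzeq]; exact hyz
          have : y = x := flat_eq_of_rSet_le hyflat hxflat hyx (by rw [hxrank, hyrank])
          exact hsame this.symm
        omega
      obtain ⟨ρ, hρz, hρT, hρprop, hρmono⟩ := exists_flat_chain hzflat hTflat hzTop
      rw [hzrank] at hρz hρprop
      rw [hTrank] at hρT hρprop
      -- the auxiliary chain ω
      set ω : Fin d → Set (J n) := fun i =>
        if (i : ℕ) < l then σ i else if (i : ℕ) = l then x else ρ ((i : ℕ) + 1) with hωdef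
      have hωlt : ∀ i : Fin d, (i : ℕ) < l → ω i = σ i := by
        intro i hi; rw [hωdef]; simp only; rw [if_pos hi]
      have hωeq : ω li = x := by
        rw [hωdef]; simp [hli]
      have hωgt : ∀ i : Fin d, l < (i : ℕ) → ω i = ρ ((i : ℕ) + 1) := by
        intro i hi; rw [hωdef]; simp only
        rw [if_neg (by omega), if_neg (by omega)]
      have hρfacts : ∀ i : Fin d, l < (i : ℕ) →
          M.IsFlat (ρ ((i : ℕ) + 1)) ∧ M.rSet (ρ ((i : ℕ) + 1)) = (i : ℕ) + 1 ∧
            ρ ((i : ℕ) + 1) ⊆ σ Top := by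
        intro i hi
        exact hρprop ((i : ℕ) + 1) (by omega) (by have := i.2; omega)
      have hωTop : ω Top = σ Top := by
        rw [hωgt Top (by rw [hTop]; omega), hTop]
        have : d - 1 + 1 = d := by omega
        rw [this, hρT]
      have hωchain : IsFlagChain M d ω := by
        apply isFlagChain_mk
        · intro i
          rcases lt_trichotomy ((i : ℕ)) l with h | h | h
          · rw [hωlt i h]; exact hσ.1 i
          · have : i = li := Fin.ext (by rw [hli]; omega)
            rw [this, hωeq]
            exact ⟨hxflat, hxadm, by rw [hxrank, hli]⟩
          · rw [hωgt i h]
            obtain ⟨hf, hr, hsub⟩ := hρfacts i h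
            exact ⟨hf, Admissible.mono hsub hTadm, hr⟩
        · intro i hi1
          set i0 : Fin d := ⟨i, by omega⟩ with hi0def
          set i1 : Fin d := ⟨i + 1, hi1⟩ with hi1def
          have hi0 : (i0 : ℕ) = i := rfl
          have hi1' : (i1 : ℕ) = i + 1 := rfl
          show ω i0 ⊆ ω i1
          rcases lt_trichotomy (i + 1) l with h | h | h
          · rw [hωlt i0 (by omega), hωlt i1 (by rw [hi1']; omega)]
            exact hσ.monoSub (by rw [Fin.le_def]; omega)
          · rw [hωlt i0 (by omega)]
            have : i1 = li := Fin.ext (by rw [hi1', hli]; omega)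
            rw [this, hωeq, hxdef]
            exact hσ.monoSub (by rw [Fin.le_def, hli, hi0]; omega)
          · rcases lt_trichotomy i l with h' | h' | h'
            · omega
            · have : i0 = li := Fin.ext (by rw [hli, hi0]; omega)
              rw [this, hωeq, hωgt i1 (by rw [hi1']; omega), hi1']
              have h2 : i + 1 + 1 = l + 2 := by omega
              rw [h2, hρz]
              exact hxz
            · rw [hωgt i0 (by rw [hi0]; omega), hωgt i1 (by rw [hi1']; omega), hi0, hi1']
              exact hρmono (i + 1) (i + 1 + 1) (by omega)
      -- ω' = update ω li y
      have hω'chain : IsFlagChain M d (Function.update ω li y) := by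
        apply isFlagChain_mk
        · intro i
          by_cases hik : i = li
          · rw [hik, Function.update_self]
            exact ⟨hyflat, hyadm, by rw [hyrank, hli]⟩
          · rw [Function.update_of_ne hik]
            exact hωchain.1 i
        · intro i hi1
          set i0 : Fin d := ⟨i, by omega⟩ with hi0def
          set i1 : Fin d := ⟨i + 1, hi1⟩ with hi1def
          have hi0 : (i0 : ℕ) = i := rfl
          have hi1' : (i1 : ℕ) = i + 1 := rfl
          have hne01 : i0 ≠ i1 := Fin.ne_of_val_ne (by omega)
          show Function.update ω li y i0 ⊆ Function.update ω li y i1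
          by_cases h0 : i0 = li
          · rw [h0, Function.update_self, Function.update_of_ne (by
              rw [← h0]; exact hne01.symm)]
            have hi1gt : l < (i1 : ℕ) := by
              have : (i0 : ℕ) = l := by rw [h0, hli]
              rw [hi1']; omega
            rw [hωgt i1 hi1gt, hi1']
            have hieq : i = l := by have : (i0 : ℕ) = l := by rw [h0, hli]
                                    omega
            have h2 : i + 1 + 1 = l + 2 := by omega
            rw [h2, hρz]
            exact hyz
          · by_cases h1 : i1 = li
            · rw [Function.update_of_ne h0, h1, Function.update_self]
              have : i < l := by
                have : (i1 : ℕ) = l := by rw [h1, hli]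
                omega
              rw [hωlt i0 (by rw [hi0]; omega), hydef]
              have hagr : σ i0 = τ i0 := hagree i0 (by rw [hi0]; omega)
              rw [hagr]
              exact hτ.monoSub (by rw [Fin.le_def, hli, hi0]; omega)
            · rw [Function.update_of_ne h0, Function.update_of_ne h1]
              exact (hωchain.2 i0 i1 (by rw [Fin.lt_def]; omega)).subset
      -- the three steps
      have step1 : c σ = c ω := by
        refine ih (l + 1) (by omega) σ ω hσ hωchain ?_ ?_
        · intro i hi
          rcases Nat.lt_or_ge (i : ℕ) l with h | h
          · rw [hωlt i h]
          · have : i = li := Fin.ext (by rw [hli]; omega)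
            rw [this, hωeq, hxdef]
        · rw [hωTop]
      have step2 : c (Function.update ω li y) = c ω :=
        key_equal hE hL hc hωchain li (by rw [hli]; omega) hω'chain
      have step3 : c (Function.update ω li y) = c τ := by
        refine ih (l + 1) (by omega) _ τ hω'chain hτ ?_ ?_
        · intro i hi
          by_cases hik : i = li
          · rw [hik, Function.update_self, hydef]
          · rw [Function.update_of_ne hik]
            rcases Nat.lt_or_ge (i : ℕ) l with h | h
            · rw [hωlt i h]; exact hagree i h
            · exfalso
              exact hik (Fin.ext (by rw [hli]; omega))
        · rw [Function.update_of_ne hTopne, hωTop, htop]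
      rw [step1, ← step2, step3]

end Main
theorem stmt_15 (n : ℕ) (hn : 1 ≤ n) (M : Matroid (J n)) (hM : IsAdmissibleMatroid M)
    (d : ℕ) (hrk : M.rnk = d + 1) (c : (Fin d → Set (J n)) → ℤ)
    (hc : IsMinkowskiWeight M d c)
    (σ₁ σ₂ : Fin d → Set (J n)) (h₁ : IsFlagChain M d σ₁) (h₂ : IsFlagChain M d σ₂)
    (hlast : ∀ i : Fin d, (i : ℕ) + 1 = d → σ₁ i = σ₂ i) :
    c σ₁ = c σ₂ := by
  rcases Nat.eq_zero_or_pos d with hd0 | hd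
  · have : σ₁ = σ₂ := by
      funext i
      exact absurd i.2 (by omega)
    rw [this]
  · have htop : σ₁ ⟨d - 1, by omega⟩ = σ₂ ⟨d - 1, by omega⟩ :=
      hlast ⟨d - 1, by omega⟩ (by show d - 1 + 1 = d; omega)
    exact conn_aux hM.1 hM.2.1 hc hd d 0 (by omega) σ₁ σ₂ h₁ h₂
      (fun i hi => absurd hi (by omega)) htop
end
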